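/- Let 𝓗 be a complex Hilbert space, Λ a finite metric space with metric ρ, and (Z_i, H_i)_{i∈I} a finite family in which each Z_i is a nonempty subset of Λ and each H_i is a bounded self-adjoint operator on 𝓗. For R ≥ 0 set H^{≤R} = ∑_{i : diam(Z_i) ≤ R} H_i, where diam(Z) = max_{x,y∈Z} ρ(x,y). Fix reals 0 ≤ R' ≤ R and t ≥ 0, a nonempty subset X ⊆ Λ, bounded operators A and B on 𝓗, reals r₀ ≥ 0 and f' ≥ 0, and a nonnegative antitone function λ : ℝ → ℝ. Write d(X, S) = min_{x∈X, s∈S} ρ(x,s) for nonempty S ⊆ Λ. Assume: (i) for every s ∈ [0, t], ‖[τ_s^{H^{≤R'}}(A), B]‖ ≤ λ(r₀) ‖A‖ ‖B‖; (ii) for every s ∈ [0, t] and every i ∈ I with R' < diam(Z_i) ≤ R, ‖[τ_s^{H^{≤R'}}(A), H_i]‖ ≤ λ(d(X, Z_i)) ‖A‖ ‖H_i‖; (iii) for every z ∈ Λ, ∑_{i : z ∈ Z_i, diam(Z_i) > R'} ‖H_i‖ ≤ f'. Then ‖[τ_t^{H^{≤R}}(A), B]‖ ≤ ‖A‖ ‖B‖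 ( λ(r₀) + 2 t f' ∑_{z∈Λ} λ(d(X, z)) ). -/

import Mathlib

open MeasureTheory intervalIntegral Classical

variable {𝓗 : Type*} [NormedAddCommGroup 𝓗] [InnerProductSpace ℂ 𝓗] [CompleteSpace 𝓗]

/-- Heisenberg evolution `τ_t^H(A) = e^{itH} A e^{−itH}` of a bounded operator `A`
under a bounded Hamiltonian `H`. -/
noncomputable def heisenberg (H : 𝓗 →L[ℂ] 𝓗) (t : ℝ) (A : 𝓗 →L[ℂ] 𝓗) : 𝓗 →L[ℂ] 𝓗 :=
  NormedSpace.exp ((Complex.I * (t : ℂ)) • H) * A *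
    NormedSpace.exp (-((Complex.I * (t : ℂ)) • H))

/-- The commutator `[A, B] = AB − BA` of two bounded operators. -/
def commutatorCLM (A B : 𝓗 →L[ℂ] 𝓗) : 𝓗 →L[ℂ] 𝓗 := A * B - B * A

/-- The distance `d(X, S) = min_{x ∈ X, s ∈ S} ρ(x, s)` between two subsets of a
metric space, written as an infimum. -/
noncomputable def setDist {Λ : Type*} [MetricSpace Λ] (X S : Set Λ) : ℝ :=
  sInf (Set.image2 dist X S)

open NormedSpace in
private lemma LR_hasDerivAt_exp_affine (K : 𝓗 →L[ℂ] 𝓗) (c d : ℂ) (s : ℝ) :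
    HasDerivAt (fun u : ℝ => exp ((c * u + d) • K))
      (c • (exp ((c * (s:ℂ) + d) • K) * K)) s := by
  have h1 : HasDerivAt (fun u : ℝ => c * (u:ℂ) + d) c s := by
    simpa using ((Complex.ofRealCLM.hasDerivAt (x := s)).const_mul c).add_const d
  have h2 := hasDerivAt_exp_smul_const (𝕂 := ℂ) K (c * (s:ℂ) + d)
  exact h2.scomp s h1

open NormedSpace in
private lemma LR_norm_exp_le (K : 𝓗 →L[ℂ] 𝓗) (hK : IsSelfAdjoint K) (s : ℝ) :
    ‖exp ((Complex.I * (s:ℂ)) • K)‖ ≤ 1 := by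
  set U := exp ((Complex.I * (s:ℂ)) • K) with hU
  have hstar : star U * U = 1 := by
    rw [hU, star_exp]
    have : star ((Complex.I * (s:ℂ)) • K) = -((Complex.I * (s:ℂ)) • K) := by
      rw [star_smul, hK.star_eq]
      simp [Complex.star_def, map_mul, Complex.conj_I, neg_smul]
    rw [this, ← exp_add_of_commute_of_mem_ball (𝕂 := ℂ) (x := -((Complex.I * (s:ℂ)) • K))
      (y := (Complex.I * (s:ℂ)) • K) (Commute.neg_left (Commute.refl _))
      ((expSeries_radius_eq_top ℂ (𝓗 →L[ℂ] 𝓗)).symm ▸ edist_lt_top _ _)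
      ((expSeries_radius_eq_top ℂ (𝓗 →L[ℂ] 𝓗)).symm ▸ edist_lt_top _ _)]
    simp
  have h2 : ‖U‖ * ‖U‖ = ‖star U * U‖ := (CStarRing.norm_star_mul_self).symm
  rw [hstar] at h2
  have h3 : ‖(1 : 𝓗 →L[ℂ] 𝓗)‖ ≤ 1 := by
    rw [ContinuousLinearMap.one_def]; exact ContinuousLinearMap.norm_id_le
  nlinarith [norm_nonneg U]

private lemma LR_alg {E : Type*} [Ring E] [Module ℂ E] [IsScalarTower ℂ E E]
    [SMulCommClass ℂ E E] (U P₂ P₃ W HT H₀ A : E)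
    (e1 : HT * W = W * HT) (e2 : H₀ * P₂ = P₂ * H₀) :
    (Complex.I • (U * HT) * (P₂ * A * P₃) +
         U * ((-Complex.I) • (P₂ * H₀) * A * P₃ + P₂ * A * (Complex.I • (P₃ * H₀)))) * W +
        U * (P₂ * A * P₃) * ((-Complex.I) • (W * HT))
    = Complex.I • (U * ((HT - H₀) * (P₂ * A * P₃) - (P₂ * A * P₃) * (HT - H₀)) * W) := by
  rw [← e1, ← e2]
  simp only [smul_mul_assoc, mul_smul_comm, neg_smul, neg_mul, mul_neg, sub_mul, mul_sub,
    add_mul, mul_add, smul_sub, smul_add, mul_assoc]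
  module

open NormedSpace in
private lemma LR_duhamel (H0 HT : 𝓗 →L[ℂ] 𝓗) (hHT : IsSelfAdjoint HT)
    (A : 𝓗 →L[ℂ] 𝓗) (t : ℝ) (ht : 0 ≤ t) (M : ℝ)
    (hM : ∀ s ∈ Set.Icc (0:ℝ) t,
      ‖(HT - H0) * heisenberg H0 s A - heisenberg H0 s A * (HT - H0)‖ ≤ M) :
    ‖heisenberg HT t A - heisenberg H0 t A‖ ≤ M * t := by
  set Φ : ℝ → (𝓗 →L[ℂ] 𝓗) := fun s =>
    exp ((Complex.I * (s:ℂ) + 0) • HT) *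
      (exp ((-Complex.I * (s:ℂ) + Complex.I * (t:ℂ)) • H0) * A *
        exp ((Complex.I * (s:ℂ) + -(Complex.I * (t:ℂ))) • H0)) *
      exp ((-Complex.I * (s:ℂ) + 0) • HT) with hΦdef
  set D : ℝ → (𝓗 →L[ℂ] 𝓗) := fun s =>
    Complex.I • (exp ((Complex.I * (s:ℂ) + 0) • HT) *
      ((HT - H0) * (exp ((-Complex.I * (s:ℂ) + Complex.I * (t:ℂ)) • H0) * A *
          exp ((Complex.I * (s:ℂ) + -(Complex.I * (t:ℂ))) • H0)) -
        (exp ((-Complex.I * (s:ℂ) + Complex.I * (t:ℂ)) • H0) * A *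
          exp ((Complex.I * (s:ℂ) + -(Complex.I * (t:ℂ))) • H0)) * (HT - H0)) *
      exp ((-Complex.I * (s:ℂ) + 0) • HT)) with hDdef
  have hΨ : ∀ s : ℝ,
      exp ((-Complex.I * (s:ℂ) + Complex.I * (t:ℂ)) • H0) * A *
        exp ((Complex.I * (s:ℂ) + -(Complex.I * (t:ℂ))) • H0) = heisenberg H0 (t - s) A := by
    intro s
    rw [heisenberg]
    have ha : (-Complex.I * (s:ℂ) + Complex.I * (t:ℂ)) = Complex.I * ((t - s : ℝ) : ℂ) := by
      push_cast; ring
    have hb : ((Complex.I * (s:ℂ) + -(Complex.I * (t:ℂ))) • H0) =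
        -((Complex.I * ((t - s : ℝ) : ℂ)) • H0) := by
      rw [← neg_smul]; congr 1; push_cast; ring
    rw [ha, hb]
  have hD : ∀ s ∈ Set.Icc (0:ℝ) t, HasDerivWithinAt Φ (D s) (Set.Icc (0:ℝ) t) s := by
    intro s _
    refine HasDerivAt.hasDerivWithinAt ?_
    have h1 := LR_hasDerivAt_exp_affine HT Complex.I 0 s
    have h2 := LR_hasDerivAt_exp_affine H0 (-Complex.I) (Complex.I * (t:ℂ)) s
    have h3 := LR_hasDerivAt_exp_affine H0 Complex.I (-(Complex.I * (t:ℂ))) s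
    have h4 := LR_hasDerivAt_exp_affine HT (-Complex.I) 0 s
    have hprod := (h1.mul ((h2.mul_const A).mul h3)).mul h4
    have e1 : HT * exp ((-Complex.I * (s:ℂ) + 0) • HT) =
        exp ((-Complex.I * (s:ℂ) + 0) • HT) * HT :=
      (((Commute.refl HT).smul_right _).exp_right).eq
    have e2 : H0 * exp ((-Complex.I * (s:ℂ) + Complex.I * (t:ℂ)) • H0) =
        exp ((-Complex.I * (s:ℂ) + Complex.I * (t:ℂ)) • H0) * H0 :=
      (((Commute.refl H0).smul_right _).exp_right).eq
    have := LR_alg (exp ((Complex.I * (s:ℂ) + 0) • HT))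
      (exp ((-Complex.I * (s:ℂ) + Complex.I * (t:ℂ)) • H0))
      (exp ((Complex.I * (s:ℂ) + -(Complex.I * (t:ℂ))) • H0))
      (exp ((-Complex.I * (s:ℂ) + 0) • HT)) HT H0 A e1 e2
    rw [hDdef]
    simp only
    rw [← this]
    exact hprod
  have hbound : ∀ s ∈ Set.Ico (0:ℝ) t, ‖D s‖ ≤ M := by
    intro s hs
    have hts : t - s ∈ Set.Icc (0:ℝ) t := ⟨by linarith [hs.2], by linarith [hs.1]⟩
    have hC : ‖(HT - H0) * heisenberg H0 (t - s) A - heisenberg H0 (t - s) A * (HT - H0)‖ ≤ M :=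
      hM _ hts
    have hU : ‖exp ((Complex.I * (s:ℂ) + 0) • HT)‖ ≤ 1 := by
      have : (Complex.I * (s:ℂ) + 0 : ℂ) = Complex.I * (s:ℂ) := by ring
      rw [this]; exact LR_norm_exp_le HT hHT s
    have hW : ‖exp ((-Complex.I * (s:ℂ) + 0) • HT)‖ ≤ 1 := by
      have : (-Complex.I * (s:ℂ) + 0 : ℂ) = Complex.I * ((-s : ℝ) : ℂ) := by push_cast; ring
      rw [this]; exact LR_norm_exp_le HT hHT (-s)
    rw [hDdef]
    simp only [hΨ s, norm_smul, Complex.norm_I, one_mul]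
    calc ‖exp ((Complex.I * (s:ℂ) + 0) • HT) *
          ((HT - H0) * heisenberg H0 (t - s) A - heisenberg H0 (t - s) A * (HT - H0)) *
          exp ((-Complex.I * (s:ℂ) + 0) • HT)‖
        ≤ ‖exp ((Complex.I * (s:ℂ) + 0) • HT) *
            ((HT - H0) * heisenberg H0 (t - s) A - heisenberg H0 (t - s) A * (HT - H0))‖ *
            ‖exp ((-Complex.I * (s:ℂ) + 0) • HT)‖ := norm_mul_le _ _
      _ ≤ (‖exp ((Complex.I * (s:ℂ) + 0) • HT)‖ *
            ‖(HT - H0) * heisenberg H0 (t - s) A - heisenberg H0 (t - s) A * (HT - H0)‖) *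
            ‖exp ((-Complex.I * (s:ℂ) + 0) • HT)‖ := by
          exact mul_le_mul_of_nonneg_right (norm_mul_le _ _) (norm_nonneg _)
      _ ≤ (1 * M) * 1 := by
          have h0M : (0:ℝ) ≤ M := le_trans (norm_nonneg _) hC
          apply mul_le_mul _ hW (norm_nonneg _) (by positivity)
          exact mul_le_mul hU hC (norm_nonneg _) zero_le_one
      _ = M := by ring
  have hMVT := norm_image_sub_le_of_norm_deriv_le_segment' hD hbound t
    (Set.right_mem_Icc.2 ht)
  have hΦt : Φ t = heisenberg HT t A := by
    rw [hΦdef]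
    simp only
    rw [show (-Complex.I * (t:ℂ) + Complex.I * (t:ℂ) : ℂ) = 0 by ring,
        show (Complex.I * (t:ℂ) + -(Complex.I * (t:ℂ)) : ℂ) = 0 by ring,
        show (Complex.I * (t:ℂ) + 0 : ℂ) = Complex.I * (t:ℂ) by ring,
        show ((-Complex.I * (t:ℂ) + 0) • HT) = -((Complex.I * (t:ℂ)) • HT) by
          rw [← neg_smul]; congr 1; ring]
    simp [heisenberg]
  have hΦ0 : Φ 0 = heisenberg H0 t A := by
    rw [hΦdef]
    simp only
    rw [show (Complex.I * ((0:ℝ):ℂ) + 0 : ℂ) = 0 by push_cast; ring,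
        show (-Complex.I * ((0:ℝ):ℂ) + 0 : ℂ) = 0 by push_cast; ring,
        show (-Complex.I * ((0:ℝ):ℂ) + Complex.I * (t:ℂ) : ℂ) = Complex.I * (t:ℂ) by
          push_cast; ring,
        show ((Complex.I * ((0:ℝ):ℂ) + -(Complex.I * (t:ℂ))) • H0) =
            -((Complex.I * (t:ℂ)) • H0) by rw [← neg_smul]; congr 1; push_cast; ring]
    simp [heisenberg]
  rw [hΦt, hΦ0, sub_zero] at hMVT
  exact hMVT

/-- Lemma III.1 of the paper: the iteration step upgrading a Lieb-Robinson bound `λ`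
for the range-`R'` truncated Hamiltonian `H^{≤R'}` to a bound for the range-`R`
truncated Hamiltonian `H^{≤R}`. -/
theorem iteration_lemma
    {Λ : Type*} [Fintype Λ] [MetricSpace Λ]
    {I : Type*} [Fintype I] (Z : I → Set Λ) (H : I → (𝓗 →L[ℂ] 𝓗))
    (hZ : ∀ i, (Z i).Nonempty) (hH : ∀ i, IsSelfAdjoint (H i))
    (R' R t : ℝ) (hR'0 : 0 ≤ R') (hR'R : R' ≤ R) (ht : 0 ≤ t)
    (X : Set Λ) (hX : X.Nonempty)
    (A B : 𝓗 →L[ℂ] 𝓗)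
    (r₀ f' : ℝ) (hr₀ : 0 ≤ r₀) (hf' : 0 ≤ f')
    (lam : ℝ → ℝ) (hlam0 : ∀ r, 0 ≤ lam r) (hlam : Antitone lam)
    -- (i): Lieb-Robinson bound for the range-`R'` truncated evolution against `B`
    (hi : ∀ s ∈ Set.Icc (0 : ℝ) t,
      ‖commutatorCLM (heisenberg
          (∑ i ∈ Finset.univ.filter fun i => Metric.diam (Z i) ≤ R', H i) s A) B‖ ≤
        lam r₀ * ‖A‖ * ‖B‖)
    -- (ii): Lieb-Robinson bound for the range-`R'` truncated evolution against the
    -- long-range terms `H_i` with `R' < diam(Z_i) ≤ R`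
    (hii : ∀ s ∈ Set.Icc (0 : ℝ) t, ∀ i : I,
      R' < Metric.diam (Z i) → Metric.diam (Z i) ≤ R →
      ‖commutatorCLM (heisenberg
          (∑ i ∈ Finset.univ.filter fun i => Metric.diam (Z i) ≤ R', H i) s A) (H i)‖ ≤
        lam (setDist X (Z i)) * ‖A‖ * ‖H i‖)
    -- (iii): the long-range terms through any one site have total strength at most `f'`
    (hiii : ∀ z : Λ,
      (∑ i ∈ Finset.univ.filter fun i => z ∈ Z i ∧ R' < Metric.diam (Z i), ‖H i‖) ≤ f') :
    ‖commutatorCLM (heisenberg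
        (∑ i ∈ Finset.univ.filter fun i => Metric.diam (Z i) ≤ R, H i) t A) B‖ ≤
      ‖A‖ * ‖B‖ * (lam r₀ + 2 * t * f' * ∑ z : Λ, lam (setDist X {z})) := by
  classical
  set H0 := ∑ i ∈ Finset.univ.filter fun i => Metric.diam (Z i) ≤ R', H i with hH0
  set HT := ∑ i ∈ Finset.univ.filter fun i => Metric.diam (Z i) ≤ R, H i with hHT
  set F := Finset.univ.filter fun i => Metric.diam (Z i) ≤ R ∧ ¬ Metric.diam (Z i) ≤ R'
    with hF
  set S := ∑ z : Λ, lam (setDist X {z}) with hS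
  have hS0 : 0 ≤ S := Finset.sum_nonneg fun z _ => hlam0 _
  -- split the Hamiltonian
  have hsplit : HT - H0 = ∑ i ∈ F, H i := by
    have h1 := Finset.sum_filter_add_sum_filter_not
      (Finset.univ.filter fun i => Metric.diam (Z i) ≤ R)
      (fun i => Metric.diam (Z i) ≤ R') H
    have h2 : (Finset.univ.filter fun i => Metric.diam (Z i) ≤ R).filter
        (fun i => Metric.diam (Z i) ≤ R') = Finset.univ.filter
        (fun i => Metric.diam (Z i) ≤ R') := by
      rw [Finset.filter_filter]
      apply Finset.filter_congr
      intro i _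
      constructor
      · rintro ⟨_, h⟩; exact h
      · intro h; exact ⟨le_trans h hR'R, h⟩
    have h3 : (Finset.univ.filter fun i => Metric.diam (Z i) ≤ R).filter
        (fun i => ¬ Metric.diam (Z i) ≤ R') = F := by
      rw [hF, Finset.filter_filter]
    rw [h2, h3] at h1
    rw [hHT, hH0, ← h1]
    abel
  have hHTsa : IsSelfAdjoint HT := by
    rw [hHT]
    unfold IsSelfAdjoint
    rw [star_sum]
    exact Finset.sum_congr rfl fun i _ => (hH i)
  -- the key summation bound
  have hsum : ∑ i ∈ F, lam (setDist X (Z i)) * ‖H i‖ ≤ S * f' := by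
    have hstep : ∀ i ∈ F, ∃ z, z ∈ Z i ∧ lam (setDist X (Z i)) ≤ lam (setDist X {z}) := by
      intro i _
      have hfin : (Set.image2 dist X (Z i)).Finite := Set.toFinite _
      have hne : (Set.image2 dist X (Z i)).Nonempty := hX.image2 (hZ i)
      have hmem := hne.csInf_mem hfin
      rw [Set.mem_image2] at hmem
      obtain ⟨x, hx, z, hz, hxz⟩ := hmem
      refine ⟨z, hz, ?_⟩
      apply hlam
      simp only [setDist]
      rw [← hxz]
      exact csInf_le (Set.toFinite _).bddBelow ⟨x, hx, z, rfl, rfl⟩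
    calc ∑ i ∈ F, lam (setDist X (Z i)) * ‖H i‖
        ≤ ∑ i ∈ F, ∑ z ∈ Finset.univ.filter (· ∈ Z i), lam (setDist X {z}) * ‖H i‖ := by
          apply Finset.sum_le_sum
          intro i hiF
          obtain ⟨z, hz, hle⟩ := hstep i hiF
          have hzmem : z ∈ Finset.univ.filter (· ∈ Z i) :=
            Finset.mem_filter.2 ⟨Finset.mem_univ _, hz⟩
          refine le_trans (mul_le_mul_of_nonneg_right hle (norm_nonneg _)) ?_
          exact Finset.single_le_sum (f := fun z => lam (setDist X {z}) * ‖H i‖)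
            (fun z _ => mul_nonneg (hlam0 _) (norm_nonneg _)) hzmem
      _ = ∑ z : Λ, ∑ i ∈ F.filter (fun i => z ∈ Z i), lam (setDist X {z}) * ‖H i‖ := by
          simp only [Finset.sum_filter]
          rw [Finset.sum_comm]
      _ ≤ ∑ z : Λ, lam (setDist X {z}) * f' := by
          apply Finset.sum_le_sum
          intro z _
          have hsub : ∑ i ∈ F.filter (fun i => z ∈ Z i), ‖H i‖ ≤
              ∑ i ∈ Finset.univ.filter fun i => z ∈ Z i ∧ R' < Metric.diam (Z i), ‖H i‖ := by
            apply Finset.sum_le_sum_of_subset_of_nonneg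
            · intro i hi2
              rw [Finset.mem_filter] at hi2
              rw [hF, Finset.mem_filter] at hi2
              exact Finset.mem_filter.2 ⟨Finset.mem_univ _,
                hi2.2, not_le.mp hi2.1.2.2⟩
            · intro i _ _; exact norm_nonneg _
          calc ∑ i ∈ F.filter (fun i => z ∈ Z i), lam (setDist X {z}) * ‖H i‖
              = lam (setDist X {z}) * ∑ i ∈ F.filter (fun i => z ∈ Z i), ‖H i‖ := by
                rw [Finset.mul_sum]
            _ ≤ lam (setDist X {z}) * f' :=
                mul_le_mul_of_nonneg_left (le_trans hsub (hiii z)) (hlam0 _)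
      _ = S * f' := by rw [hS, Finset.sum_mul]
  -- bound on the perturbation commutator
  have hM : ∀ s ∈ Set.Icc (0:ℝ) t,
      ‖(HT - H0) * heisenberg H0 s A - heisenberg H0 s A * (HT - H0)‖ ≤ ‖A‖ * (S * f') := by
    intro s hs
    have hcomm : (HT - H0) * heisenberg H0 s A - heisenberg H0 s A * (HT - H0) =
        -∑ i ∈ F, commutatorCLM (heisenberg H0 s A) (H i) := by
      rw [hsplit]
      simp only [commutatorCLM, Finset.mul_sum, Finset.sum_mul, ← Finset.sum_sub_distrib]
      rw [← Finset.sum_neg_distrib]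
      exact Finset.sum_congr rfl fun i _ => by abel
    rw [hcomm, norm_neg]
    calc ‖∑ i ∈ F, commutatorCLM (heisenberg H0 s A) (H i)‖
        ≤ ∑ i ∈ F, ‖commutatorCLM (heisenberg H0 s A) (H i)‖ := norm_sum_le _ _
      _ ≤ ∑ i ∈ F, lam (setDist X (Z i)) * ‖A‖ * ‖H i‖ := by
          apply Finset.sum_le_sum
          intro i hiF
          rw [hF, Finset.mem_filter] at hiF
          exact hii s hs i (not_le.mp hiF.2.2) hiF.2.1
      _ = ‖A‖ * ∑ i ∈ F, lam (setDist X (Z i)) * ‖H i‖ := by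
          rw [Finset.mul_sum]; exact Finset.sum_congr rfl fun i _ => by ring
      _ ≤ ‖A‖ * (S * f') := by
          exact mul_le_mul_of_nonneg_left hsum (norm_nonneg _)
  -- Duhamel bound
  have hduh := LR_duhamel H0 HT hHTsa A t ht (‖A‖ * (S * f')) hM
  -- assemble
  have htri : ‖commutatorCLM (heisenberg HT t A) B‖ ≤
      ‖commutatorCLM (heisenberg H0 t A) B‖ +
      2 * ‖heisenberg HT t A - heisenberg H0 t A‖ * ‖B‖ := by
    have hdecomp : commutatorCLM (heisenberg HT t A) B =
        commutatorCLM (heisenberg H0 t A) B +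
        commutatorCLM (heisenberg HT t A - heisenberg H0 t A) B := by
      simp only [commutatorCLM, sub_mul, mul_sub]
      abel
    rw [hdecomp]
    refine le_trans (norm_add_le _ _) ?_
    gcongr
    calc ‖commutatorCLM (heisenberg HT t A - heisenberg H0 t A) B‖
        ≤ ‖(heisenberg HT t A - heisenberg H0 t A) * B‖ +
          ‖B * (heisenberg HT t A - heisenberg H0 t A)‖ := norm_sub_le _ _
      _ ≤ ‖heisenberg HT t A - heisenberg H0 t A‖ * ‖B‖ +
          ‖B‖ * ‖heisenberg HT t A - heisenberg H0 t A‖ :=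
          add_le_add (norm_mul_le _ _) (norm_mul_le _ _)
      _ = 2 * ‖heisenberg HT t A - heisenberg H0 t A‖ * ‖B‖ := by ring
  calc ‖commutatorCLM (heisenberg HT t A) B‖
      ≤ ‖commutatorCLM (heisenberg H0 t A) B‖ +
        2 * ‖heisenberg HT t A - heisenberg H0 t A‖ * ‖B‖ := htri
    _ ≤ lam r₀ * ‖A‖ * ‖B‖ + 2 * (‖A‖ * (S * f') * t) * ‖B‖ := by
        have h1 := hi t (Set.right_mem_Icc.2 ht)
        have h2 : 2 * ‖heisenberg HT t A - heisenberg H0 t A‖ * ‖B‖ ≤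
            2 * (‖A‖ * (S * f') * t) * ‖B‖ := by
          have := mul_le_mul_of_nonneg_right (mul_le_mul_of_nonneg_left hduh
            (by norm_num : (0:ℝ) ≤ 2)) (norm_nonneg B)
          linarith
        linarith
    _ = ‖A‖ * ‖B‖ * (lam r₀ + 2 * t * f' * S) := by ring
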